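/- Let (X,d) be a metric space, M a nonempty proper closed subset of X, F : X∖M → (0,∞) a 1-Lipschitz function, and i(x,y) = 2·log((F(x) + F(y) + d(x,y)) / (2·√(F(x)·F(y)))) the generalized Nikolov–Andreev metric on X∖M. Then the identity map 1 : (X∖M, d) → (X∖M, i) is a homeomorphism, and it is 3-quasiconformal: for every x ∈ X∖M, limsup_{r→0⁺} [ sup{ i(x,y) : y ∈ X∖M, d(x,y) ≤ r } / inf{ i(x,y) : y ∈ X∖M, d(x,y) ≥ r } ] ≤ 3. -/

import Mathlib

open Real Filter

noncomputable def iNA {X : Type*} [MetricSpace X] (F : X → ℝ) (x y : X) : ℝ :=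
  2 * Real.log ((F x + F y + dist x y) / (2 * Real.sqrt (F x * F y)))

lemma iNA_comm {X : Type*} [MetricSpace X] (F : X → ℝ) (x y : X) : iNA F x y = iNA F y x := by
  unfold iNA
  rw [dist_comm, mul_comm (F x), add_comm (F x)]

lemma sqrt_mul_le_add_half {a b : ℝ} (ha : 0 ≤ a) (hb : 0 ≤ b) :
    Real.sqrt (a * b) ≤ (a + b) / 2 := by
  rw [show (a + b) / 2 = Real.sqrt (((a + b) / 2) ^ 2) from (Real.sqrt_sq (by positivity)).symm]
  exact Real.sqrt_le_sqrt (by nlinarith [sq_nonneg (a - b)])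

lemma one_le_ratio {a b d : ℝ} (ha : 0 < a) (hb : 0 < b) (hd : 0 ≤ d) :
    1 ≤ (a + b + d) / (2 * Real.sqrt (a * b)) := by
  have hs : 0 < Real.sqrt (a * b) := Real.sqrt_pos.2 (by positivity)
  rw [le_div_iff₀ (by positivity)]
  have := sqrt_mul_le_add_half ha.le hb.le
  linarith

lemma iNA_nonneg {X : Type*} [MetricSpace X] (F : X → ℝ) {x y : X}
    (ha : 0 < F x) (hb : 0 < F y) : 0 ≤ iNA F x y := by
  have := Real.log_nonneg (one_le_ratio ha hb (dist_nonneg (x := x) (y := y)))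
  unfold iNA; linarith

lemma le_iNA {X : Type*} [MetricSpace X] (F : X → ℝ) {x y : X}
    (ha : 0 < F x) (hb : 0 < F y) (hlip : |F x - F y| ≤ dist x y) :
    dist x y / (F x + dist x y) ≤ iNA F x y := by
  set a := F x with ha'
  set b := F y with hb'
  set d := dist x y with hd'
  have hd : 0 ≤ d := dist_nonneg
  have hblea : b ≤ a + d := by have := abs_le.1 hlip; linarith [this.1]
  have hs : 0 < Real.sqrt (a * b) := Real.sqrt_pos.2 (by positivity)
  have hsq : 2 * Real.sqrt (a * b) ≤ a + b := by
    have := sqrt_mul_le_add_half ha.le hb.le; linarith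
  set t := d / (2 * a + d) with ht'
  have ht0 : 0 ≤ t := by positivity
  have h1 : 1 + t ≤ (a + b + d) / (2 * Real.sqrt (a * b)) := by
    have h2 : 1 + t ≤ (a + b + d) / (a + b) := by
      have he : 1 + t = (2 * a + 2 * d) / (2 * a + d) := by
        rw [ht']; field_simp; ring
      rw [he, div_le_div_iff₀ (by positivity) (by positivity)]
      nlinarith
    have h3 : (a + b + d) / (a + b) ≤ (a + b + d) / (2 * Real.sqrt (a * b)) := by
      apply div_le_div_of_nonneg_left (by positivity) (by positivity) hsq
    linarith
  have hlog1 : Real.log (1 + t) ≤ Real.log ((a + b + d) / (2 * Real.sqrt (a * b))) :=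
    Real.log_le_log (by positivity) h1
  have hlog2 : t / (1 + t) ≤ Real.log (1 + t) := by
    have h := Real.log_le_sub_one_of_pos (x := (1 + t)⁻¹) (by positivity)
    rw [Real.log_inv] at h
    have : 1 - (1 + t)⁻¹ = t / (1 + t) := by field_simp; ring
    linarith
  have heq : d / (a + d) = 2 * (t / (1 + t)) := by
    rw [ht']; field_simp; ring
  unfold iNA
  rw [← ha', ← hb', ← hd', heq]
  linarith

lemma iNA_le {X : Type*} [MetricSpace X] (F : X → ℝ) {x y : X} {r : ℝ}
    (ha : 0 < F x) (hb : 0 < F y) (hlip : |F x - F y| ≤ dist x y)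
    (hdr : dist x y ≤ r) (hr : r < F x) :
    iNA F x y ≤ r * (3 * F x + r) / (F x * (F x - r)) := by
  set a := F x with ha'
  set b := F y with hb'
  set d := dist x y with hd'
  have hd : 0 ≤ d := dist_nonneg
  have hab := abs_le.1 hlip
  have hbge : a - r ≤ b := by linarith [hab.2]
  have hblea : b ≤ a + d := by linarith [hab.1]
  have har : 0 < a - r := by linarith
  have hr0 : 0 ≤ r := le_trans hd hdr
  have hs : 0 < Real.sqrt (a * b) := Real.sqrt_pos.2 (by positivity)
  have hs2 : 0 < Real.sqrt (a * (a - r)) := Real.sqrt_pos.2 (by positivity)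
  set Q := (a + r) / Real.sqrt (a * (a - r)) with hQ'
  have hq : (a + b + d) / (2 * Real.sqrt (a * b)) ≤ Q := by
    rw [hQ']
    have hnum : a + b + d ≤ 2 * (a + r) := by linarith
    have hden : Real.sqrt (a * (a - r)) ≤ Real.sqrt (a * b) :=
      Real.sqrt_le_sqrt (by nlinarith)
    calc (a + b + d) / (2 * Real.sqrt (a * b)) ≤ (2 * (a + r)) / (2 * Real.sqrt (a * (a - r))) := by
          apply div_le_div₀ (by positivity) hnum (by positivity) (by linarith)
      _ = (a + r) / Real.sqrt (a * (a - r)) := by ring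
  have hlogq : Real.log ((a + b + d) / (2 * Real.sqrt (a * b))) ≤ Real.log Q :=
    Real.log_le_log (by positivity) hq
  have hQsq : Q ^ 2 = (a + r) ^ 2 / (a * (a - r)) := by
    rw [hQ', div_pow, Real.sq_sqrt (by positivity)]
  have h2log : 2 * Real.log Q = Real.log (Q ^ 2) := by
    rw [Real.log_pow]; push_cast; ring
  have hfin : Real.log (Q ^ 2) ≤ Q ^ 2 - 1 := Real.log_le_sub_one_of_pos (by positivity)
  have hval : Q ^ 2 - 1 = r * (3 * a + r) / (a * (a - r)) := by
    rw [hQsq]; field_simp; ring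
  unfold iNA
  rw [← ha', ← hb', ← hd']
  calc 2 * Real.log ((a + b + d) / (2 * Real.sqrt (a * b))) ≤ 2 * Real.log Q := by linarith
    _ = Real.log (Q ^ 2) := h2log
    _ ≤ Q ^ 2 - 1 := hfin
    _ = r * (3 * a + r) / (a * (a - r)) := hval

theorem stmt_13 {X : Type*} [MetricSpace X] (M : Set X)
    (hMclosed : IsClosed M) (hMne : M.Nonempty) (hMproper : M ≠ Set.univ)
    (F : X → ℝ) (hFpos : ∀ x ∉ M, 0 < F x)
    (hFlip : ∀ x ∉ M, ∀ y ∉ M, |F x - F y| ≤ dist x y) :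
    -- the identity map `(X∖M, d) → (X∖M, i)` is a homeomorphism
    (∀ x ∉ M, ∀ u : ℕ → X, (∀ n, u n ∉ M) →
      (Tendsto (fun n => dist (u n) x) atTop (nhds 0) ↔
        Tendsto (fun n => iNA F (u n) x) atTop (nhds 0))) ∧
    -- and it is 3-quasiconformal
    (∀ x ∉ M,
      Filter.limsup
        (fun r : ℝ =>
          sSup ((fun y => iNA F x y) '' {y | y ∉ M ∧ dist x y ≤ r}) /
          sInf ((fun y => iNA F x y) '' {y | y ∉ M ∧ r ≤ dist x y}))
        (nhdsWithin (0 : ℝ) (Set.Ioi 0)) ≤ 3) := by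
  constructor
  · intro x hx u hu
    have ha : 0 < F x := hFpos x hx
    set a := F x with ha'
    constructor
    · intro hd
      have hd2 : ∀ᶠ n in atTop, dist (u n) x ≤ a / 2 := by
        have : Set.Iic (a / 2) ∈ nhds (0 : ℝ) := Iic_mem_nhds (by linarith)
        exact hd this
      apply squeeze_zero' (g := fun n =>
        (dist (u n) x) * (3 * a + dist (u n) x) / (a * (a - dist (u n) x)))
      · exact Eventually.of_forall fun n => iNA_nonneg F (hFpos _ (hu n)) ha
      · filter_upwards [hd2] with n hn
        rw [iNA_comm]
        have := iNA_le F (y := u n) (r := dist (u n) x) ha (hFpos _ (hu n))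
          (hFlip x hx (u n) (hu n)) (by rw [dist_comm]) (by linarith)
        exact this
      · have hG : ContinuousAt (fun t : ℝ => t * (3 * a + t) / (a * (a - t))) 0 := by
          apply ContinuousAt.div (by fun_prop) (by fun_prop)
          simp; positivity
        have := hG.tendsto.comp hd
        simpa [Function.comp_def] using this
    · intro hi
      have h0 : Tendsto (fun n => dist (u n) x / (a + dist (u n) x)) atTop (nhds 0) := by
        apply squeeze_zero (fun n => by positivity) (fun n => ?_) hi
        have := le_iNA F (y := u n) ha (hFpos _ (hu n)) (hFlip x hx (u n) (hu n))
        rw [iNA_comm, dist_comm]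
        exact this
      have hK : ContinuousAt (fun t : ℝ => a * t / (1 - t)) 0 := by
        apply ContinuousAt.div (by fun_prop) (by fun_prop)
        norm_num
      have hcomp := hK.tendsto.comp h0
      simp only [Function.comp_def] at hcomp
      norm_num at hcomp
      convert hcomp using 2 with n
      have hdn : (0:ℝ) ≤ dist (u n) x := dist_nonneg
      field_simp
      rw [add_sub_cancel_right, mul_div_assoc, div_self ha.ne', mul_one]
  · intro x hx
    have ha : 0 < F x := hFpos x hx
    set a := F x with ha'
    set f := fun r : ℝ =>
      sSup ((fun y => iNA F x y) '' {y | y ∉ M ∧ dist x y ≤ r}) /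
        sInf ((fun y => iNA F x y) '' {y | y ∉ M ∧ r ≤ dist x y}) with hf'
    set g := fun r : ℝ => (3 * a + r) * (a + r) / (a * (a - r)) with hg'
    have hg : Tendsto g (nhdsWithin (0:ℝ) (Set.Ioi 0)) (nhds 3) := by
      have hc : ContinuousAt g 0 := by
        apply ContinuousAt.div (by fun_prop) (by fun_prop)
        simp; positivity
      have h3 : g 0 = 3 := by
        simp only [hg', add_zero, sub_zero]
        field_simp
      have := hc.tendsto.mono_left (nhdsWithin_le_nhds (s := Set.Ioi (0:ℝ)))
      rwa [h3] at this
    have hfg : ∀ᶠ r in nhdsWithin (0:ℝ) (Set.Ioi 0), f r ≤ g r := by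
      have hmem : Set.Ioo (0:ℝ) (a / 2) ∈ nhdsWithin (0:ℝ) (Set.Ioi 0) :=
        Ioo_mem_nhdsGT_of_mem ⟨le_refl 0, by linarith⟩
      filter_upwards [hmem] with r hr
      obtain ⟨hr0, hra2⟩ := hr
      have hra : r < a := by linarith
      have har : 0 < a - r := by linarith
      have hgpos : 0 < g r := by
        simp only [hg']
        exact div_pos (by nlinarith) (by nlinarith)
      set Sb := r * (3 * a + r) / (a * (a - r)) with hSb'
      have hSb0 : 0 ≤ Sb := by
        rw [hSb']
        exact le_of_lt (div_pos (by nlinarith) (by nlinarith))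
      have hsup : sSup ((fun y => iNA F x y) '' {y | y ∉ M ∧ dist x y ≤ r}) ≤ Sb := by
        apply Real.sSup_le _ hSb0
        rintro z ⟨y, ⟨hyM, hyd⟩, rfl⟩
        exact iNA_le F ha (hFpos y hyM) (hFlip x hx y hyM) hyd hra
      by_cases hne : ({y | y ∉ M ∧ r ≤ dist x y}).Nonempty
      · have him : ((fun y => iNA F x y) '' {y | y ∉ M ∧ r ≤ dist x y}).Nonempty :=
          hne.image _
        have hinf : r / (a + r) ≤ sInf ((fun y => iNA F x y) '' {y | y ∉ M ∧ r ≤ dist x y}) := by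
          apply le_csInf him
          rintro z ⟨y, ⟨hyM, hyd⟩, rfl⟩
          have h1 := le_iNA F ha (hFpos y hyM) (hFlip x hx y hyM)
          have hdn : (0:ℝ) ≤ dist x y := dist_nonneg
          have h2 : r / (a + r) ≤ dist x y / (a + dist x y) := by
            rw [div_le_div_iff₀ (by positivity) (by positivity)]
            nlinarith
          linarith
        have hstep : f r ≤ Sb / (r / (a + r)) :=
          div_le_div₀ hSb0 hsup (by positivity) hinf
        calc f r ≤ Sb / (r / (a + r)) := hstep
          _ = g r := by
              rw [hSb', hg']
              have h1 : r ≠ 0 := ne_of_gt hr0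
              have h2 : a + r ≠ 0 := by positivity
              have h3 : a * (a - r) ≠ 0 := by nlinarith
              field_simp
      · have hemp : {y | y ∉ M ∧ r ≤ dist x y} = ∅ := Set.not_nonempty_iff_eq_empty.1 hne
        have : f r = 0 := by
          rw [hf']; simp only [hemp, Set.image_empty, Real.sInf_empty, div_zero]
        rw [this]; exact hgpos.le
    have h0 : ∀ᶠ r in nhdsWithin (0:ℝ) (Set.Ioi 0), 0 ≤ f r := by
      apply Eventually.of_forall
      intro r
      apply div_nonneg
      · apply Real.sSup_nonneg
        rintro z ⟨y, ⟨hyM, _⟩, rfl⟩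
        exact iNA_nonneg F ha (hFpos y hyM)
      · apply Real.sInf_nonneg
        rintro z ⟨y, ⟨hyM, _⟩, rfl⟩
        exact iNA_nonneg F ha (hFpos y hyM)
    have hcb : IsCoboundedUnder (· ≤ ·) (nhdsWithin (0:ℝ) (Set.Ioi 0)) f :=
      IsBoundedUnder.isCoboundedUnder_le ⟨0, by simpa using h0⟩
    calc Filter.limsup f (nhdsWithin (0:ℝ) (Set.Ioi 0))
        ≤ Filter.limsup g (nhdsWithin (0:ℝ) (Set.Ioi 0)) :=
          limsup_le_limsup hfg hcb hg.isBoundedUnder_le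
      _ = 3 := hg.limsup_eq
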